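/- In the monoid Π_N = ⟨a, b | baa(ba)^N = a⟩ with N ≥ 2, writing X = ba, for all p, q ≥ 0 the equality X^p · a · a · X^q = a · a · X^{q + pN²} holds. -/

import Mathlib

inductive AB : Type
  | a : AB
  | b : AB

/-- The generator `a` as a word in the free monoid on `{a, b}`. -/
def wa : FreeMonoid AB := FreeMonoid.of AB.a

/-- The generator `b` as a word in the free monoid on `{a, b}`. -/
def wb : FreeMonoid AB := FreeMonoid.of AB.b

/-- The single defining relation `baa(ba)^N = a` of `Π_N`. -/
def piRel (N : ℕ) : FreeMonoid AB → FreeMonoid AB → Prop :=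
  fun x y => x = wb * wa * wa * (wb * wa) ^ N ∧ y = wa

/-- Equality in `Π_N`, i.e. the congruence on the free monoid generated by the relation. -/
def piEq (N : ℕ) : FreeMonoid AB → FreeMonoid AB → Prop :=
  fun u v => conGen (piRel N) u v

lemma rel0 (N : ℕ) : (conGen (piRel N)) (wb * wa * wa * (wb * wa) ^ N) wa :=
  ConGen.Rel.of _ _ ⟨rfl, rfl⟩

lemma absorb (N r : ℕ) :
    (conGen (piRel N)) (wb * wa * wa * (wb * wa) ^ N * (wb * wa) ^ r)
      (wa * (wb * wa) ^ r) :=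
  (conGen (piRel N)).mul (rel0 N) ((conGen (piRel N)).refl _)

lemma step (N k r : ℕ) :
    (conGen (piRel N)) (wb * wa * wa * (wb * wa) ^ k * wa * (wb * wa) ^ (r + k * N))
      (wb * wa * wa * wa * (wb * wa) ^ r) := by
  induction k with
  | zero => simpa using (conGen (piRel N)).refl _
  | succ k ih =>
    refine ((conGen (piRel N)).trans ?_ ih)
    have h1 : wb * wa * wa * (wb * wa) ^ (k+1) * wa * (wb * wa) ^ (r + (k+1) * N)
        = (wb * wa * wa * (wb * wa) ^ k) * (wb * wa * wa * (wb * wa) ^ N * (wb * wa) ^ (r + k * N)) := by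
      have : r + (k+1) * N = N + (r + k * N) := by ring
      rw [this]
      simp [pow_add, pow_succ, mul_assoc]
    rw [h1]
    have := (conGen (piRel N)).mul ((conGen (piRel N)).refl (wb * wa * wa * (wb * wa) ^ k)) (absorb N (r + k * N))
    convert this using 1
    simp [mul_assoc]

lemma key (N q : ℕ) :
    (conGen (piRel N)) ((wb * wa) * wa * wa * (wb * wa) ^ q)
      (wa * wa * (wb * wa) ^ (q + N ^ 2)) := by
  apply (conGen (piRel N)).symm
  refine (conGen (piRel N)).trans ?_ ((conGen (piRel N)).trans (step N N q) ?_)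
  · have h1 := (conGen (piRel N)).mul ((conGen (piRel N)).symm (rel0 N))
      ((conGen (piRel N)).refl (wa * (wb * wa) ^ (q + N ^ 2)))
    convert h1 using 1 <;> simp [mul_assoc, sq]
  · simpa [mul_assoc] using (conGen (piRel N)).refl ((wb * wa) * wa * wa * (wb * wa) ^ q)

theorem stmt_11 (N : ℕ) (hN : 2 ≤ N) (p q : ℕ) :
    piEq N ((wb * wa) ^ p * wa * wa * (wb * wa) ^ q)
      (wa * wa * (wb * wa) ^ (q + p * N ^ 2)) := by
  induction p generalizing q with
  | zero => simpa [piEq] using (conGen (piRel N)).refl (wa * wa * (wb * wa) ^ q)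
  | succ p ih =>
    have h1 : (wb * wa) ^ (p+1) * wa * wa * (wb * wa) ^ q
        = (wb * wa) ^ p * ((wb * wa) * wa * wa * (wb * wa) ^ q) := by
      rw [pow_succ]; simp [mul_assoc]
    have h2 := (conGen (piRel N)).mul ((conGen (piRel N)).refl ((wb * wa) ^ p)) (key N q)
    have h3 := ih (q + N ^ 2)
    have h4 : q + N ^ 2 + p * N ^ 2 = q + (p + 1) * N ^ 2 := by ring
    show (conGen (piRel N)) _ _
    rw [h1]
    refine (conGen (piRel N)).trans h2 ?_
    rw [← h4]
    simpa [mul_assoc, piEq] using h3
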